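/- If g : ℝ → ℝ≥0 is log-concave, symmetric (g(x) = g(−x)), and supported in [−c, c], then (∫_{−c}^{c} x² e^{−x²/2} g(x) dx) / (∫_{−c}^{c} e^{−x²/2} g(x) dx) ≤ 1 − (1/(2π)) e^{−c²}, assuming the denominator is positive. -/

import Mathlib

open MeasureTheory ProbabilityTheory Real

/-- The standard Gaussian measure `N(0,1)^n` on `Fin n → ℝ`. -/
noncomputable def stdGaussian (n : ℕ) : Measure (Fin n → ℝ) :=
  Measure.pi fun _ => gaussianReal 0 1

/-- The 0/1 indicator function of a set. -/
noncomputable def ind {n : ℕ} (K : Set (Fin n → ℝ)) (x : Fin n → ℝ) : ℝ :=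
  Set.indicator K (fun _ => (1:ℝ)) x

/-- The convex influence of direction `v` on `K`:
`Inf_v[K] = E_{x ∼ N(0,1)^n}[K(x) · (1 - (v·x)²)/√2]`. -/
noncomputable def convInf {n : ℕ} (K : Set (Fin n → ℝ)) (v : Fin n → ℝ) : ℝ :=
  ∫ x, ind K x * ((1 - (∑ i, v i * x i)^2) / Real.sqrt 2) ∂(stdGaussian n)

/-- Total convex influence, defined as the sum of coordinate influences. -/
noncomputable def convTInf {n : ℕ} (K : Set (Fin n → ℝ)) : ℝ :=
  ∑ i : Fin n, convInf K (fun j => if j = i then 1 else 0)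

/-- Total convex influence in integral form:
`TInf[K] = E_{x ∼ N(0,1)^n}[K(x) · (n - ‖x‖²)/√2]`. -/
noncomputable def convTInfI {n : ℕ} (K : Set (Fin n → ℝ)) : ℝ :=
  ∫ x, ind K x * (((n : ℝ) - ∑ i, (x i)^2) / Real.sqrt 2) ∂(stdGaussian n)

/-- Gaussian volume `γ(K)` under `N(0,1)^n`. -/
noncomputable def gvol {n : ℕ} (K : Set (Fin n → ℝ)) : ℝ :=
  (stdGaussian n K).toReal

/-- Variance of the indicator of `K` under the standard Gaussian: `γ(K)(1-γ(K))`. -/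
noncomputable def gvar {n : ℕ} (K : Set (Fin n → ℝ)) : ℝ :=
  gvol K * (1 - gvol K)


-- FTC computation
lemma ftc1 (t : ℝ) : ∫ x in (0:ℝ)..t, (1 - x^2) * Real.exp (-x^2/2) = t * Real.exp (-t^2/2) := by
  have h : ∀ x : ℝ, HasDerivAt (fun y => y * Real.exp (-y^2/2)) ((1 - x^2) * Real.exp (-x^2/2)) x := by
    intro x
    have h1 : HasDerivAt (fun y : ℝ => -y^2/2) (-x) x := by
      have := ((hasDerivAt_pow 2 x).neg).div_const 2
      exact this.congr_deriv (by push_cast; ring)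
    have h2 : HasDerivAt (fun y : ℝ => Real.exp (-y^2/2)) (Real.exp (-x^2/2) * (-x)) x :=
      (Real.hasDerivAt_exp _).comp x h1
    have h3 := (hasDerivAt_id x).mul h2
    simp only [id] at h3; exact h3.congr_deriv (by ring)
  have hcont : IntervalIntegrable (fun x => (1 - x^2) * Real.exp (-x^2/2)) volume 0 t := by
    apply Continuous.intervalIntegrable; continuity
  have := intervalIntegral.integral_eq_sub_of_hasDerivAt (fun x _ => h x) hcont
  simpa using this

lemma key (ε t : ℝ) (hε : 0 ≤ ε) (h : ε ≤ Real.exp (-t^2/2)) (ht : 0 ≤ t) :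
    0 ≤ ∫ x in (0:ℝ)..t, (1 - ε - x^2) * Real.exp (-x^2/2) := by
  have hie : IntervalIntegrable (fun x => Real.exp (-x^2/2)) volume 0 t := by
    apply Continuous.intervalIntegrable; continuity
  have hi1 : IntervalIntegrable (fun x => (1 - x^2) * Real.exp (-x^2/2)) volume 0 t := by
    apply Continuous.intervalIntegrable; continuity
  have hsplit : (∫ x in (0:ℝ)..t, (1 - ε - x^2) * Real.exp (-x^2/2))
      = (∫ x in (0:ℝ)..t, (1 - x^2) * Real.exp (-x^2/2)) - ε * ∫ x in (0:ℝ)..t, Real.exp (-x^2/2) := by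
    rw [← intervalIntegral.integral_const_mul, ← intervalIntegral.integral_sub hi1 (hie.const_mul ε)]
    congr 1; funext x; ring
  have hbound : ∫ x in (0:ℝ)..t, Real.exp (-x^2/2) ≤ t := by
    calc ∫ x in (0:ℝ)..t, Real.exp (-x^2/2) ≤ ∫ _x in (0:ℝ)..t, (1:ℝ) := by
          apply intervalIntegral.integral_mono_on ht hie intervalIntegrable_const
          intro x _; exact Real.exp_le_one_iff.2 (by nlinarith [sq_nonneg x])
      _ = t := by simp
  have hnn : 0 ≤ ∫ x in (0:ℝ)..t, Real.exp (-x^2/2) := by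
    apply intervalIntegral.integral_nonneg ht
    intro x _; positivity
  rw [hsplit, ftc1]
  nlinarith [mul_le_mul_of_nonneg_left hbound hε, mul_le_mul_of_nonneg_left h ht]

lemma keyIcc (ε t : ℝ) (hε : 0 ≤ ε) (h : ε ≤ Real.exp (-t^2/2)) (ht : 0 ≤ t) :
    0 ≤ ∫ x in Set.Icc (-t) t, (1 - ε - x^2) * Real.exp (-x^2/2) := by
  set φ : ℝ → ℝ := fun x => (1 - ε - x^2) * Real.exp (-x^2/2) with hφ
  have hic : ∀ a b : ℝ, IntervalIntegrable φ volume a b := by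
    intro a b; apply Continuous.intervalIntegrable; continuity
  have h1 : ∫ x in Set.Icc (-t) t, φ x = ∫ x in (-t)..t, φ x := by
    rw [intervalIntegral.integral_of_le (by linarith), MeasureTheory.integral_Icc_eq_integral_Ioc]
  have h2 : ∫ x in (-t)..(0:ℝ), φ x = ∫ x in (0:ℝ)..t, φ x := by
    have := intervalIntegral.integral_comp_neg (a := (0:ℝ)) (b := t) (f := φ)
    simp only [neg_zero] at this
    rw [← this]
    congr 1; funext x; simp [hφ, neg_pow]
  have h3 : ∫ x in (-t)..t, φ x = (∫ x in (-t)..(0:ℝ), φ x) + ∫ x in (0:ℝ)..t, φ x :=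
    (intervalIntegral.integral_add_adjacent_intervals (hic _ _) (hic _ _)).symm
  have := key ε t hε h ht
  rw [h1, h3, h2]; linarith

lemma layer (c ε : ℝ) (hc : 0 ≤ c) (hε : 0 ≤ ε) (hεc : ε ≤ Real.exp (-c^2/2))
    (g : ℝ → ℝ) (hg0 : ∀ x, 0 ≤ g x) (gm : Measurable g)
    (hmono : ∀ x y : ℝ, 0 ≤ x → x ≤ y → g y ≤ g x) (habs : ∀ x, g x = g |x|) :
    0 ≤ ∫ x in Set.Icc (-c) c, ((1 - ε - x^2) * Real.exp (-x^2/2)) * g x := by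
  set φ : ℝ → ℝ := fun x => (1 - ε - x^2) * Real.exp (-x^2/2) with hφ
  set M : ℝ := g 0 with hM
  have hgM : ∀ x, g x ≤ M := fun x => (habs x).le.trans (hmono 0 |x| le_rfl (abs_nonneg x))
  set μ1 : Measure ℝ := volume.restrict (Set.Icc (-c) c) with hμ1
  set μ2 : Measure ℝ := volume.restrict (Set.Ioc 0 M) with hμ2
  haveI : IsFiniteMeasure μ1 := ⟨by rw [hμ1, Measure.restrict_apply_univ]; exact measure_Icc_lt_top⟩
  haveI : IsFiniteMeasure μ2 := ⟨by rw [hμ2, Measure.restrict_apply_univ]; exact measure_Ioc_lt_top⟩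
  -- layer cake for g
  have hgi : ∀ x : ℝ, (∫ s, (if s < g x then (1:ℝ) else 0) ∂μ2) = g x := by
    intro x
    have h1 : (fun s => if s < g x then (1:ℝ) else 0)
        = Set.indicator (Set.Iio (g x)) (fun _ => (1:ℝ)) := by
      funext s; by_cases h : s < g x <;> simp [Set.indicator, Set.mem_Iio, h]
    rw [h1, MeasureTheory.integral_indicator measurableSet_Iio, hμ2,
      Measure.restrict_restrict measurableSet_Iio]
    have h2 : Set.Iio (g x) ∩ Set.Ioc 0 M = Set.Ioo 0 (g x) := by
      ext s; constructor
      · rintro ⟨hs1, hs2, _⟩; exact ⟨hs2, hs1⟩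
      · rintro ⟨hs1, hs2⟩; exact ⟨hs2, hs1, hs2.le.trans ((hgM x).trans le_rfl)⟩
    rw [h2, setIntegral_const, Real.volume_real_Ioo_of_le (hg0 x)]
    simp [ENNReal.toReal_ofReal (hg0 x)]
  -- measurability of the product function
  have hFmeas : Measurable (fun p : ℝ × ℝ => φ p.1 * (if p.2 < g p.1 then (1:ℝ) else 0)) := by
    have hφc : Continuous φ := by rw [hφ]; continuity
    exact (hφc.measurable.comp measurable_fst).mul
      (Measurable.ite (measurableSet_lt measurable_snd (gm.comp measurable_fst))
        measurable_const measurable_const)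
  -- integrability on the product
  have hFint : Integrable (Function.uncurry fun x s => φ x * (if s < g x then (1:ℝ) else 0))
      (μ1.prod μ2) := by
    apply Integrable.mono' (integrable_const (1 + ε + c^2))
      hFmeas.aestronglyMeasurable
    have hset : (μ1.prod μ2) {p : ℝ × ℝ | p.1 ∉ Set.Icc (-c) c} = 0 := by
      refine measure_mono_null (fun p hp => ?_) (t := (Set.Icc (-c) c)ᶜ ×ˢ (Set.univ : Set ℝ)) ?_
      · exact ⟨hp, trivial⟩
      · rw [Measure.prod_prod, hμ1, Measure.restrict_apply measurableSet_Icc.compl]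
        simp
    have h1 : ∀ᵐ p : ℝ × ℝ ∂(μ1.prod μ2), p.1 ∈ Set.Icc (-c) c := by
      rw [MeasureTheory.ae_iff]; exact hset
    filter_upwards [h1] with p hp
    show ‖φ p.1 * (if p.2 < g p.1 then (1:ℝ) else 0)‖ ≤ 1 + ε + c^2
    have h2 : |φ p.1| ≤ 1 + ε + c^2 := by
      rw [hφ, abs_mul]
      have he : Real.exp (-(p.1)^2/2) ≤ 1 := Real.exp_le_one_iff.2 (by nlinarith [sq_nonneg p.1])
      have hx2 : (p.1)^2 ≤ c^2 := sq_le_sq' hp.1 hp.2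
      have : |1 - ε - (p.1)^2| ≤ 1 + ε + c^2 := by
        rw [abs_le]; constructor <;> nlinarith [sq_nonneg p.1]
      calc |1 - ε - (p.1)^2| * |Real.exp (-(p.1)^2/2)| ≤ (1 + ε + c^2) * 1 := by
            apply mul_le_mul this _ (abs_nonneg _) (by nlinarith [sq_nonneg c])
            rw [abs_of_pos (Real.exp_pos _)]; exact he
        _ = 1 + ε + c^2 := mul_one _
    rw [Real.norm_eq_abs, abs_mul]
    calc |φ p.1| * |if p.2 < g p.1 then (1:ℝ) else 0| ≤ (1 + ε + c^2) * 1 := by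
          apply mul_le_mul h2 _ (abs_nonneg _) (by nlinarith [sq_nonneg c])
          split <;> simp
      _ = 1 + ε + c^2 := mul_one _
  -- swap
  have hswap := MeasureTheory.integral_integral_swap hFint
  -- LHS of swap equals our integral
  have hLHS : (∫ x, ∫ s, φ x * (if s < g x then (1:ℝ) else 0) ∂μ2 ∂μ1)
      = ∫ x, φ x * g x ∂μ1 := by
    apply integral_congr_ae; filter_upwards with x
    rw [MeasureTheory.integral_const_mul, hgi x]
  -- each inner integral on the RHS is nonneg
  have hI : ∀ s : ℝ, 0 ≤ ∫ x, φ x * (if s < g x then (1:ℝ) else 0) ∂μ1 := by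
    intro s
    have hind : (fun x => φ x * (if s < g x then (1:ℝ) else 0))
        = Set.indicator {x | s < g x} φ := by
      funext x; by_cases h : s < g x <;> simp [Set.indicator, h]
    have hms : MeasurableSet {x : ℝ | s < g x} := measurableSet_lt measurable_const gm
    rw [hind, MeasureTheory.integral_indicator hms, hμ1,
      Measure.restrict_restrict hms]
    set A : Set ℝ := {x | s < g x} ∩ Set.Icc (-c) c with hA
    rcases Set.eq_empty_or_nonempty A with hAe | hAn
    · rw [hAe]; simp
    · obtain ⟨y, hy⟩ := hAn
      have hy0 : (0:ℝ) ∈ A := by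
        constructor
        · have : g y ≤ g 0 := (habs y).le.trans (hmono 0 |y| le_rfl (abs_nonneg y))
          exact lt_of_lt_of_le hy.1 this
        · exact ⟨by linarith, hc⟩
      have hbdd : BddAbove A := ⟨c, fun x hx => hx.2.2⟩
      set t₀ : ℝ := sSup A with ht₀
      have ht0 : 0 ≤ t₀ := le_csSup hbdd hy0
      have htc : t₀ ≤ c := csSup_le ⟨y, hy⟩ (fun x hx => hx.2.2)
      have hsub1 : Set.Ioo (-t₀) t₀ ⊆ A := by
        intro x hx
        have habsx : |x| < t₀ := abs_lt.2 ⟨hx.1, hx.2⟩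
        obtain ⟨z, hzA, hz⟩ := exists_lt_of_lt_csSup ⟨y, hy⟩ habsx
        have hgz : g x = g |x| := habs x
        have : g z ≤ g x := by rw [hgz]; exact hmono |x| z (abs_nonneg x) hz.le
        constructor
        · exact lt_of_lt_of_le hzA.1 this
        · have : |x| ≤ c := le_trans hz.le hzA.2.2
          exact ⟨neg_le_of_abs_le this, le_of_abs_le this⟩
      have hsub2 : A ⊆ Set.Icc (-t₀) t₀ := by
        intro x hx
        have h1 : x ≤ t₀ := le_csSup hbdd hx
        have hnx : -x ∈ A := by
          refine ⟨?_, ?_, ?_⟩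
          · show s < g (-x); rw [habs (-x), abs_neg, ← habs x]; exact hx.1
          · linarith [hx.2.2]
          · linarith [hx.2.1]
        have h2 : -x ≤ t₀ := le_csSup hbdd hnx
        exact ⟨by linarith, h1⟩
      have hae : A =ᵐ[volume] Set.Icc (-t₀) t₀ := by
        rw [MeasureTheory.ae_eq_set]
        constructor
        · rw [Set.diff_eq_empty.2 hsub2]; simp
        · refine measure_mono_null (Set.diff_subset_diff_right hsub1) ?_
          rw [Set.Icc_diff_Ioo_same (by linarith)]
          exact ((Set.finite_singleton t₀).insert _).measure_zero volume
      rw [MeasureTheory.setIntegral_congr_set hae]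
      apply keyIcc ε t₀ hε _ ht0
      calc ε ≤ Real.exp (-c^2/2) := hεc
        _ ≤ Real.exp (-t₀^2/2) := by
            apply Real.exp_le_exp.2; nlinarith
  have hR : 0 ≤ ∫ s, ∫ x, φ x * (if s < g x then (1:ℝ) else 0) ∂μ1 ∂μ2 :=
    integral_nonneg (fun s => hI s)
  rw [show (fun x => ((1 - ε - x^2) * Real.exp (-x^2/2)) * g x) = fun x => φ x * g x from rfl]
  rw [← hLHS]
  rw [hswap] at *
  exact hR

/-- If `g : ℝ → ℝ≥0` is log-concave, symmetric, supported in `[-c,c]`, then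
`(∫_{-c}^{c} x² e^{-x²/2} g) / (∫_{-c}^{c} e^{-x²/2} g) ≤ 1 - (1/(2π)) e^{-c²}`. -/
theorem stmt1 (c : ℝ) (g : ℝ → ℝ) (hg0 : ∀ x, 0 ≤ g x)
    (hlc : ∀ x y θ : ℝ, 0 ≤ θ → θ ≤ 1 →
      (g x) ^ θ * (g y) ^ (1 - θ) ≤ g (θ * x + (1 - θ) * y))
    (hsym : ∀ x, g (-x) = g x)
    (hsupp : ∀ x, c < |x| → g x = 0)
    (hpos : 0 < ∫ x in Set.Icc (-c) c, Real.exp (-x ^ 2 / 2) * g x) :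
    (∫ x in Set.Icc (-c) c, x ^ 2 * Real.exp (-x ^ 2 / 2) * g x) /
      (∫ x in Set.Icc (-c) c, Real.exp (-x ^ 2 / 2) * g x)
      ≤ 1 - (1 / (2 * π)) * Real.exp (-c ^ 2) := by
  -- c is positive
  have hc : 0 < c := by
    by_contra h
    push_neg at h
    have h0 : volume (Set.Icc (-c) c) = 0 := by
      rw [Real.volume_Icc]
      exact ENNReal.ofReal_eq_zero.2 (by linarith)
    rw [show volume.restrict (Set.Icc (-c) c) = 0 from Measure.restrict_eq_zero.2 h0,
      integral_zero_measure] at hpos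
    exact lt_irrefl 0 hpos
  -- monotonicity of g on [0, ∞)
  have hmono : ∀ x y : ℝ, 0 ≤ x → x ≤ y → g y ≤ g x := by
    intro x y hx hxy
    rcases le_or_gt (g y) 0 with hgy | hgy
    · linarith [hg0 x]
    rcases eq_or_lt_of_le (hx.trans hxy) with hy0 | hy0
    · have hxeq : x = y := le_antisymm hxy (by linarith)
      rw [hxeq]
    set θ : ℝ := (y + x) / (2 * y) with hθ
    have hθ0 : 0 ≤ θ := by positivity
    have hθ1 : θ ≤ 1 := by rw [hθ, div_le_one (by linarith)]; linarith
    have h1 := hlc y (-y) θ hθ0 hθ1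
    rw [hsym y] at h1
    have hyne : y ≠ 0 := ne_of_gt hy0
    have h2 : θ * y + (1 - θ) * (-y) = x := by rw [hθ]; field_simp; ring
    rw [h2] at h1
    calc g y = g y ^ (θ + (1 - θ)) := by norm_num
      _ = g y ^ θ * g y ^ (1 - θ) := Real.rpow_add hgy θ (1 - θ)
      _ ≤ g x := h1
  -- symmetry via absolute value
  have habs : ∀ x : ℝ, g x = g |x| := by
    intro x
    rcases le_or_gt 0 x with h | h
    · rw [abs_of_nonneg h]
    · rw [abs_of_neg h, ← hsym x]
  -- measurability of g
  have gm : Measurable g := by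
    have hant : Antitone (fun x : ℝ => g (max x 0)) := by
      intro a b hab
      exact hmono (max a 0) (max b 0) (le_max_right a 0) (max_le_max hab le_rfl)
    have heq : g = fun x => g (max |x| 0) := by
      funext x; rw [max_eq_left (abs_nonneg x), ← habs x]
    rw [heq]
    exact hant.measurable.comp measurable_abs
  set ε : ℝ := (1 / (2 * π)) * Real.exp (-c ^ 2) with hεdef
  have hπ : 1 ≤ 2 * π := by nlinarith [Real.pi_gt_three]
  have hε0 : 0 ≤ ε := by positivity
  have hεe : ε ≤ Real.exp (-c ^ 2 / 2) := by
    calc ε ≤ Real.exp (-c ^ 2) := by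
          rw [hεdef]
          calc (1 / (2 * π)) * Real.exp (-c ^ 2) ≤ 1 * Real.exp (-c ^ 2) := by
                apply mul_le_mul_of_nonneg_right _ (Real.exp_pos _).le
                rw [div_le_one (by linarith)]; linarith
            _ = Real.exp (-c ^ 2) := one_mul _
      _ ≤ Real.exp (-c ^ 2 / 2) := Real.exp_le_exp.2 (by nlinarith [sq_nonneg c])
  have hlay := layer c ε hc.le hε0 hεe g hg0 gm hmono habs
  -- integrability of bounded-continuous times g on the compact interval
  have hgint : ∀ h : ℝ → ℝ, Continuous h →
      IntegrableOn (fun x => h x * g x) (Set.Icc (-c) c) volume := by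
    intro h hcont
    obtain ⟨C, hC⟩ := (isCompact_Icc (a := -c) (b := c)).exists_bound_of_continuousOn
      hcont.continuousOn
    haveI : IsFiniteMeasure (volume.restrict (Set.Icc (-c) c)) :=
      ⟨by rw [Measure.restrict_apply_univ]; exact measure_Icc_lt_top⟩
    apply Integrable.mono' (integrable_const (C * g 0))
      ((hcont.measurable.mul gm).aestronglyMeasurable)
    filter_upwards [ae_restrict_mem measurableSet_Icc] with x hx
    rw [Real.norm_eq_abs, Pi.mul_apply, abs_mul, abs_of_nonneg (hg0 x)]
    have h1 : |h x| ≤ C := by rw [← Real.norm_eq_abs]; exact hC x hx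
    have h2 : g x ≤ g 0 := (habs x).le.trans (hmono 0 |x| le_rfl (abs_nonneg x))
    have hC0 : 0 ≤ C := le_trans (norm_nonneg _) (hC x hx)
    exact mul_le_mul h1 h2 (hg0 x) hC0
  have hecont : Continuous fun x : ℝ => Real.exp (-x ^ 2 / 2) :=
    Real.continuous_exp.comp ((continuous_pow 2).neg.div_const 2)
  have hB : IntegrableOn (fun x => Real.exp (-x ^ 2 / 2) * g x) (Set.Icc (-c) c) volume :=
    hgint _ hecont
  have hA : IntegrableOn (fun x => x ^ 2 * Real.exp (-x ^ 2 / 2) * g x) (Set.Icc (-c) c) volume := by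
    have := hgint (fun x => x ^ 2 * Real.exp (-x ^ 2 / 2)) ((continuous_pow 2).mul hecont)
    simpa [mul_assoc] using this
  have hsplit : (fun x => ((1 - ε - x ^ 2) * Real.exp (-x ^ 2 / 2)) * g x)
      = fun x => (1 - ε) * (Real.exp (-x ^ 2 / 2) * g x)
        - x ^ 2 * Real.exp (-x ^ 2 / 2) * g x := by
    funext x; ring
  rw [hsplit, integral_sub (hB.const_mul (1 - ε)) hA, MeasureTheory.integral_const_mul] at hlay
  rw [div_le_iff₀ hpos]
  linarith
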